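/- Let (M,g,η,∇) be a semi-Weyl manifold admitting torsion (or (M,g,∇) a statistical manifold admitting torsion) and let ψ be a smooth function on M. Then g(T^∇(Y,Z),∇ψ)+g(T^∇(Z,∇ψ),Y)+g(T^∇(∇ψ,Y),Z)=0 for all vector fields Y,Z. -/
import Mathlib

/-!
We work in a concrete model of a pseudo-Riemannian manifold: the manifold `M` is
(an open chart of) a real normed space `E`, vector fields are maps `E → E`,
smooth functions are maps `E → ℝ`, a (pseudo-Riemannian) metric is a field of
symmetric non-degenerate bilinear forms `g : E → E →ₗ[ℝ] E →ₗ[ℝ] ℝ`, a `1`-form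
is a field of linear forms `η : E → E →ₗ[ℝ] ℝ`, and an affine connection is an
operation `D : (E → E) → (E → E) → (E → E)` on vector fields which is
function-linear in the first argument and a derivation in the second one.
-/

open scoped BigOperators

noncomputable section

variable {E : Type*} [NormedAddCommGroup E] [NormedSpace ℝ E]

/-- The derivative `X(f)` of a function `f` along a vector field `X`. -/
def dirD (f : E → ℝ) (X : E → E) : E → ℝ := fun x => fderiv ℝ f x (X x)

/-- The Lie bracket `[X, Y]` of two vector fields. -/
def lieB (X Y : E → E) : E → E := fun x => fderiv ℝ Y x (X x) - fderiv ℝ X x (Y x)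

/-- The torsion tensor `T^∇(X,Y) = ∇_X Y − ∇_Y X − [X,Y]` of an affine connection. -/
def tors (D : (E → E) → (E → E) → (E → E)) (X Y : E → E) : E → E :=
  fun x => D X Y x - D Y X x - lieB X Y x

/-- The curvature tensor `R^∇(X,Y)Z = ∇_X∇_Y Z − ∇_Y∇_X Z − ∇_{[X,Y]}Z`. -/
def curv (D : (E → E) → (E → E) → (E → E)) (X Y Z : E → E) : E → E :=
  fun x => D X (D Y Z) x - D Y (D X Z) x - D (lieB X Y) Z x

/-- The covariant derivative `(∇_X g)(Y, Z)` of the metric `g`. -/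
def covg (g : E → E →ₗ[ℝ] E →ₗ[ℝ] ℝ) (D : (E → E) → (E → E) → (E → E))
    (X Y Z : E → E) : E → ℝ :=
  fun x => fderiv ℝ (fun y => g y (Y y) (Z y)) x (X x)
    - g x (D X Y x) (Z x) - g x (Y x) (D X Z x)

/-- `g` is a pseudo-Riemannian metric: a symmetric non-degenerate bilinear form
at every point. -/
def IsMetric (g : E → E →ₗ[ℝ] E →ₗ[ℝ] ℝ) : Prop :=
  (∀ x u v, g x u v = g x v u) ∧ ∀ x u, (∀ v, g x u v = 0) → u = 0

/-- `D` is an affine connection on vector fields. -/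
def IsConn (D : (E → E) → (E → E) → (E → E)) : Prop :=
  (∀ X Y Z, D (fun x => X x + Y x) Z = fun x => D X Z x + D Y Z x) ∧
  (∀ (f : E → ℝ) (X Y), D (fun x => f x • X x) Y = fun x => f x • D X Y x) ∧
  (∀ X Y Z, D X (fun x => Y x + Z x) = fun x => D X Y x + D X Z x) ∧
  (∀ (f : E → ℝ) (X Y), D X (fun x => f x • Y x)
      = fun x => dirD f X x • Y x + f x • D X Y x)

/-- The connection `D` is flat: its curvature tensor vanishes identically. -/
def FlatConn (D : (E → E) → (E → E) → (E → E)) : Prop := ∀ X Y Z x, curv D X Y Z x = 0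

/-- The connection `D` is torsion-free: its torsion tensor vanishes identically. -/
def TorsFree (D : (E → E) → (E → E) → (E → E)) : Prop := ∀ X Y x, tors D X Y x = 0

/-- `(M, g, ∇)` is a statistical manifold admitting torsion (SMT):
`(∇_X g)(Y,Z) = (∇_Y g)(X,Z) − g(T^∇(X,Y),Z)`. -/
def IsSMT (g : E → E →ₗ[ℝ] E →ₗ[ℝ] ℝ) (D : (E → E) → (E → E) → (E → E)) : Prop :=
  ∀ X Y Z x, covg g D X Y Z x = covg g D Y X Z x - g x (tors D X Y x) (Z x)

/-- `(M, g, η, ∇)` is a semi-Weyl manifold admitting torsion (SWMT):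
`(∇_X g)(Y,Z) + η(X)g(Y,Z) = (∇_Y g)(X,Z) + η(Y)g(X,Z) − g(T^∇(X,Y),Z)`. -/
def IsSWMT (g : E → E →ₗ[ℝ] E →ₗ[ℝ] ℝ) (η : E → E →ₗ[ℝ] ℝ)
    (D : (E → E) → (E → E) → (E → E)) : Prop :=
  ∀ X Y Z x, covg g D X Y Z x + η x (X x) * g x (Y x) (Z x)
    = covg g D Y X Z x + η x (Y x) * g x (X x) (Z x) - g x (tors D X Y x) (Z x)

/-- `D` and `Ds` are dual connections with respect to `g`:
`X(g(Y,Z)) = g(∇_X Y, Z) + g(Y, ∇*_X Z)`. -/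
def DualConn (g : E → E →ₗ[ℝ] E →ₗ[ℝ] ℝ) (D Ds : (E → E) → (E → E) → (E → E)) : Prop :=
  ∀ X Y Z x, fderiv ℝ (fun y => g y (Y y) (Z y)) x (X x)
    = g x (D X Y x) (Z x) + g x (Y x) (Ds X Z x)

/-- `D` and `Ds` are semi-dual connections with respect to `(g, η)`:
`X(g(Y,Z)) = g(∇_X Y, Z) + g(Y, ∇*_X Z) − η(X)g(Y,Z)`. -/
def SemiDualConn (g : E → E →ₗ[ℝ] E →ₗ[ℝ] ℝ) (η : E → E →ₗ[ℝ] ℝ)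
    (D Ds : (E → E) → (E → E) → (E → E)) : Prop :=
  ∀ X Y Z x, fderiv ℝ (fun y => g y (Y y) (Z y)) x (X x)
    = g x (D X Y x) (Z x) + g x (Y x) (Ds X Z x) - η x (X x) * g x (Y x) (Z x)

/-- The Ricci tensor `Ric(Y,Z) = Σᵢ εᵢ g(R(Eᵢ,Y)Z, Eᵢ)` of a connection, computed
via a `g`-orthonormal frame `Efr` with signs `eps`. -/
def ricci (g : E → E →ₗ[ℝ] E →ₗ[ℝ] ℝ) (D : (E → E) → (E → E) → (E → E))
    {n : ℕ} (Efr : Fin n → E → E) (eps : Fin n → ℝ) (Y Z : E → E) : E → ℝ :=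
  fun x => ∑ i, eps i * g x (curv D (Efr i) Y Z x) (Efr i x)

/-- `trace (T_Y) = Σᵢ εᵢ g(T^∇(Eᵢ,Y), Eᵢ)`, the trace of `X ↦ T^∇(X,Y)`. -/
def trTor (g : E → E →ₗ[ℝ] E →ₗ[ℝ] ℝ) (D : (E → E) → (E → E) → (E → E))
    {n : ℕ} (Efr : Fin n → E → E) (eps : Fin n → ℝ) (Y : E → E) : E → ℝ :=
  fun x => ∑ i, eps i * g x (tors D (Efr i) Y x) (Efr i x)

/-- A vector field is tangent to the submanifold determined by the field of
(tangential) projections `P`. -/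
def Tang (P : E → E →ₗ[ℝ] E) (X : E → E) : Prop := ∀ x, P x (X x) = X x

/-- The projection of a vector field tangent to a lightlike hypersurface onto the
screen distribution, `P X = X − g(X,N)ξ`. -/
def scrP (g : E → E →ₗ[ℝ] E →ₗ[ℝ] ℝ) (ξ N : E → E) (X : E → E) : E → E :=
  fun x => X x - g x (X x) (N x) • ξ x

/-- The induced connection on sections of the screen distribution of a lightlike
hypersurface: the `S(TM')`-component of `∇_X Y` in `TM = S(TM') ⊕ Rad(TM') ⊕ tr(TM')`. -/
def scrConn (g : E → E →ₗ[ℝ] E →ₗ[ℝ] ℝ) (ξ N : E → E)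
    (D : (E → E) → (E → E) → (E → E)) : (E → E) → (E → E) → (E → E) :=
  fun X Y x => D X Y x - g x (D X Y x) (N x) • ξ x - g x (D X Y x) (ξ x) • N x

end

/-- Auxiliary: `covg` is symmetric in its last two slots when `g` is symmetric. -/
theorem covg_symm' {E : Type*} [NormedAddCommGroup E] [NormedSpace ℝ E]
    (g : E → E →ₗ[ℝ] E →ₗ[ℝ] ℝ) (hsym : ∀ x u v, g x u v = g x v u)
    (D : (E → E) → (E → E) → (E → E)) (X Y Z : E → E) (x : E) :
    covg g D X Y Z x = covg g D X Z Y x := by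
  unfold covg
  have hf : (fun y => g y (Y y) (Z y)) = fun y => g y (Z y) (Y y) :=
    funext fun y => hsym y _ _
  rw [hf, hsym x (D X Y x) (Z x), hsym x (Y x) (D X Z x)]
  ring

/-- Let `(M,g,η,∇)` be a semi-Weyl manifold admitting torsion
(the case `η = 0` being a statistical manifold admitting torsion) and let `ψ` be a
smooth function on `M`.  Then
`g(T^∇(Y,Z),∇ψ) + g(T^∇(Z,∇ψ),Y) + g(T^∇(∇ψ,Y),Z) = 0` for all vector fields. -/
theorem statement10 {E : Type*} [NormedAddCommGroup E] [NormedSpace ℝ E]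
    (g : E → E →ₗ[ℝ] E →ₗ[ℝ] ℝ) (hg : IsMetric g) (η : E → E →ₗ[ℝ] ℝ)
    (D : (E → E) → (E → E) → (E → E)) (hD : IsConn D)
    (hsw : IsSWMT g η D)
    (ψ : E → ℝ) (hψ : ContDiff ℝ (⊤ : ℕ∞) ψ)
    (gradψ : E → E) (hgradψ : ∀ x v, g x (gradψ x) v = fderiv ℝ ψ x v) :
    ∀ Y Z x,
      g x (tors D Y Z x) (gradψ x) + g x (tors D Z gradψ x) (Y x)
        + g x (tors D gradψ Y x) (Z x) = 0 := by
  intro Y Z x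
  obtain ⟨hsym, -⟩ := hg
  have h1 := hsw Y Z gradψ x
  have h2 := hsw Z gradψ Y x
  have h3 := hsw gradψ Y Z x
  have c1 := covg_symm' g hsym D Z Y gradψ x
  have c2 := covg_symm' g hsym D gradψ Z Y x
  have c3 := covg_symm' g hsym D Y gradψ Z x
  have p1 : η x (Z x) * g x (Y x) (gradψ x) = η x (Z x) * g x (gradψ x) (Y x) := by
    rw [hsym x (Y x) (gradψ x)]
  have p2 : η x (gradψ x) * g x (Z x) (Y x) = η x (gradψ x) * g x (Y x) (Z x) := by
    rw [hsym x (Z x) (Y x)]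
  have p3 : η x (Y x) * g x (gradψ x) (Z x) = η x (Y x) * g x (Z x) (gradψ x) := by
    rw [hsym x (gradψ x) (Z x)]
  linarith
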